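/- Let p ∈ ℕ, let Γ = {0,1}^p, let π : Γ → (0,∞) with Σ_{γ∈Γ} π(γ) = 1, let S : Γ → (0,∞), and let w_A, w_R, w_S : {0,…,p} → [0,1] satisfy w_A(k) + w_R(k) + w_S(k) = 1 for all k. Define T_m and the off-diagonal pRNS transition probabilities A(γ, γ′) for γ ≠ γ′ as in the pRNS sampler, and set K(γ, γ′) = A(γ, γ′) for γ′ ≠ γ and K(γ, γ) = 1 − Σ_{γ′≠γ} A(γ, γ′). Then K(γ, γ) ≥ 0 for every γ, each K(γ, ·) is a probability mass function on Γ, and π is invariant for K, i.e. Σ_{γ∈Γ} π(γ) K(γ, γ′) = π(γ′) for every γ′ ∈ Γ. -/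

import Mathlib

/-- The three move types of the pRNS sampler. -/
inductive Move
  | A | R | S
deriving DecidableEq

instance : Fintype Move :=
  ⟨{Move.A, Move.R, Move.S}, fun m => by cases m <;> simp⟩

/-- The paired backward move: `A′ = R`, `R′ = A`, `S′ = S`. -/
def Move.pair : Move → Move
  | .A => .R
  | .R => .A
  | .S => .S

/-- The size `|γ|` of an inclusion vector: the number of active coordinates. -/
def gsize {p : ℕ} (γ : Fin p → Bool) : ℕ :=
  (Finset.univ.filter fun i => γ i = true).card

open Classical in
/-- The add, remove and swap neighborhoods `N_m(γ)`. -/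
noncomputable def Nmove {p : ℕ} : Move → (Fin p → Bool) → Finset (Fin p → Bool)
  | .A, γ => Finset.univ.filter fun γ' => ∃ j, γ j = false ∧ γ' = Function.update γ j true
  | .R, γ => Finset.univ.filter fun γ' => ∃ j, γ j = true ∧ γ' = Function.update γ j false
  | .S, γ => Finset.univ.filter fun γ' => ∃ j k, γ j = true ∧ γ k = false ∧
      γ' = Function.update (Function.update γ j false) k true

open Classical in
/-- The pRNS proposal transition function restricted to `N_m(γ)`:
`T_m(γ, γ′) = S(γ′)/Σ_{γ̃∈N_m(γ)} S(γ̃)` for `γ′ ∈ N_m(γ)` and `0` otherwise. -/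
noncomputable def Tmove {p : ℕ} (S : (Fin p → Bool) → ℝ) (m : Move)
    (γ γ' : Fin p → Bool) : ℝ :=
  if γ' ∈ Nmove m γ then S γ' / ∑ x ∈ Nmove m γ, S x else 0

open Classical in
/-- The off-diagonal pRNS transition probability `A(γ, γ′)` for `γ ≠ γ′`. -/
noncomputable def Atrans {p : ℕ} (pr S : (Fin p → Bool) → ℝ) (w : Move → ℕ → ℝ)
    (γ γ' : Fin p → Bool) : ℝ :=
  ∑ m : Move,
    if γ' ∈ Nmove m γ ∧ 0 < w m (gsize γ) then
      w m (gsize γ) * Tmove S m γ γ' *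
        min 1 (pr γ' * (w m.pair (gsize γ') * Tmove S m.pair γ' γ) /
               (pr γ * (w m (gsize γ) * Tmove S m γ γ')))
    else 0

open Classical in
/-- The pRNS transition kernel: off-diagonal entries `A(γ, γ′)`, diagonal entry
`1 − Σ_{γ′ ≠ γ} A(γ, γ′)`. -/
noncomputable def Ktrans {p : ℕ} (pr S : (Fin p → Bool) → ℝ) (w : Move → ℕ → ℝ)
    (γ γ' : Fin p → Bool) : ℝ :=
  if γ' = γ then 1 - ∑ x ∈ Finset.univ.erase γ, Atrans pr S w γ x
  else Atrans pr S w γ γ'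

lemma Move.pair_pair (m : Move) : m.pair.pair = m := by cases m <;> rfl

lemma sum_Move (f : Move → ℝ) : ∑ m : Move, f m = f .A + f .R + f .S := by
  show ∑ m ∈ (Finset.univ : Finset Move), f m = _
  rw [show (Finset.univ : Finset Move) = {Move.A, Move.R, Move.S} from rfl]
  rw [Finset.sum_insert (by decide), Finset.sum_insert (by decide), Finset.sum_singleton]; ring

lemma mem_Nmove_symm {p : ℕ} {m : Move} {γ γ' : Fin p → Bool}
    (h : γ' ∈ Nmove m γ) : γ ∈ Nmove m.pair γ' := by
  cases m with
  | A =>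
    simp only [Nmove, Move.pair, Finset.mem_filter, Finset.mem_univ, true_and] at h ⊢
    obtain ⟨j, hj, rfl⟩ := h
    refine ⟨j, by simp, ?_⟩
    funext i
    by_cases hij : i = j <;> simp [Function.update_apply, hij, hj]
  | R =>
    simp only [Nmove, Move.pair, Finset.mem_filter, Finset.mem_univ, true_and] at h ⊢
    obtain ⟨j, hj, rfl⟩ := h
    refine ⟨j, by simp, ?_⟩
    funext i
    by_cases hij : i = j <;> simp [Function.update_apply, hij, hj]
  | S =>
    simp only [Nmove, Move.pair, Finset.mem_filter, Finset.mem_univ, true_and] at h ⊢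
    obtain ⟨j, k, hj, hk, rfl⟩ := h
    have hjk : j ≠ k := by rintro rfl; rw [hj] at hk; exact Bool.noConfusion hk
    refine ⟨k, j, by simp, ?_, ?_⟩
    · simp [Function.update_apply, hjk]
    · funext i
      by_cases hik : i = k
      · subst hik; simp [Function.update_apply, hjk, Ne.symm hjk, hk]
      · by_cases hij : i = j
        · subst hij; simp [Function.update_apply, hjk, hik, hj]
        · simp [Function.update_apply, hij, hik]

lemma mem_Nmove_symm_iff {p : ℕ} {m : Move} {γ γ' : Fin p → Bool} :
    γ' ∈ Nmove m γ ↔ γ ∈ Nmove m.pair γ' := by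
  constructor
  · exact mem_Nmove_symm
  · intro h
    have := mem_Nmove_symm h
    rwa [Move.pair_pair] at this

section
variable {p : ℕ} {S : (Fin p → Bool) → ℝ}

lemma Tmove_nonneg (hS : ∀ γ, 0 < S γ) (m : Move) (γ γ' : Fin p → Bool) :
    0 ≤ Tmove S m γ γ' := by
  unfold Tmove; split
  · exact div_nonneg (hS _).le (Finset.sum_nonneg fun x _ => (hS x).le)
  · exact le_rfl

lemma Tmove_pos (hS : ∀ γ, 0 < S γ) {m : Move} {γ γ' : Fin p → Bool}
    (h : γ' ∈ Nmove m γ) : 0 < Tmove S m γ γ' := by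
  unfold Tmove
  rw [if_pos h]
  exact div_pos (hS _) (Finset.sum_pos (fun x _ => hS x) ⟨γ', h⟩)

lemma Tmove_rowsum_le (hS : ∀ γ, 0 < S γ) (m : Move) (γ : Fin p → Bool) :
    ∑ γ' ∈ Nmove m γ, Tmove S m γ γ' ≤ 1 := by
  have h : ∀ γ' ∈ Nmove m γ, Tmove S m γ γ' = S γ' / ∑ x ∈ Nmove m γ, S x := by
    intro γ' hγ'
    unfold Tmove
    rw [if_pos hγ']
  rw [Finset.sum_congr rfl h, ← Finset.sum_div]
  exact div_le_one_of_le₀ le_rfl (Finset.sum_nonneg fun x _ => (hS x).le)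

end

lemma mul_min_one_div {a b : ℝ} (ha : 0 < a) : a * min 1 (b / a) = min a b := by
  rw [mul_min_of_nonneg _ _ ha.le, mul_one, mul_comm a (b / a), div_mul_cancel₀ b ha.ne']

section
variable {p : ℕ} (pr S : (Fin p → Bool) → ℝ) (w : Move → ℕ → ℝ)

lemma term_balance (hpr : ∀ γ, 0 < pr γ) (hS : ∀ γ, 0 < S γ) (hw0 : ∀ m k, 0 ≤ w m k)
    (m : Move) (γ γ' : Fin p → Bool) :
    pr γ * (if γ' ∈ Nmove m γ ∧ 0 < w m (gsize γ) then
      w m (gsize γ) * Tmove S m γ γ' *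
        min 1 (pr γ' * (w m.pair (gsize γ') * Tmove S m.pair γ' γ) /
               (pr γ * (w m (gsize γ) * Tmove S m γ γ')))
    else 0)
    = pr γ' * (if γ ∈ Nmove m.pair γ' ∧ 0 < w m.pair (gsize γ') then
      w m.pair (gsize γ') * Tmove S m.pair γ' γ *
        min 1 (pr γ * (w m (gsize γ) * Tmove S m γ γ') /
               (pr γ' * (w m.pair (gsize γ') * Tmove S m.pair γ' γ)))
    else 0) := by
  by_cases hmem : γ' ∈ Nmove m γ
  · have hmem' : γ ∈ Nmove m.pair γ' := mem_Nmove_symm hmem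
    have hT : 0 < Tmove S m γ γ' := Tmove_pos hS hmem
    have hT' : 0 < Tmove S m.pair γ' γ := Tmove_pos hS hmem'
    by_cases hw : 0 < w m (gsize γ) <;> by_cases hw' : 0 < w m.pair (gsize γ')
    · have ha : 0 < pr γ * (w m (gsize γ) * Tmove S m γ γ') :=
        mul_pos (hpr γ) (mul_pos hw hT)
      have hb : 0 < pr γ' * (w m.pair (gsize γ') * Tmove S m.pair γ' γ) :=
        mul_pos (hpr γ') (mul_pos hw' hT')
      rw [if_pos ⟨hmem, hw⟩, if_pos ⟨hmem', hw'⟩]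
      rw [show pr γ * (w m (gsize γ) * Tmove S m γ γ' * min 1
            (pr γ' * (w m.pair (gsize γ') * Tmove S m.pair γ' γ) /
             (pr γ * (w m (gsize γ) * Tmove S m γ γ')))) =
          (pr γ * (w m (gsize γ) * Tmove S m γ γ')) * min 1
            (pr γ' * (w m.pair (gsize γ') * Tmove S m.pair γ' γ) /
             (pr γ * (w m (gsize γ) * Tmove S m γ γ'))) from by ring]
      rw [show pr γ' * (w m.pair (gsize γ') * Tmove S m.pair γ' γ * min 1
            (pr γ * (w m (gsize γ) * Tmove S m γ γ') /
             (pr γ' * (w m.pair (gsize γ') * Tmove S m.pair γ' γ)))) =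
          (pr γ' * (w m.pair (gsize γ') * Tmove S m.pair γ' γ)) * min 1
            (pr γ * (w m (gsize γ) * Tmove S m γ γ') /
             (pr γ' * (w m.pair (gsize γ') * Tmove S m.pair γ' γ))) from by ring]
      rw [mul_min_one_div ha, mul_min_one_div hb, min_comm]
    · have hz : w m.pair (gsize γ') = 0 := le_antisymm (not_lt.1 hw') (hw0 _ _)
      rw [if_pos ⟨hmem, hw⟩, if_neg (fun h => hw' h.2)]
      rw [hz]
      simp
    · have hz : w m (gsize γ) = 0 := le_antisymm (not_lt.1 hw) (hw0 _ _)
      rw [if_neg (fun h => hw h.2), if_pos ⟨hmem', hw'⟩]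
      rw [hz]
      simp
    · rw [if_neg (fun h => hw h.2), if_neg (fun h => hw' h.2)]; ring
  · have hmem' : γ ∉ Nmove m.pair γ' := fun h => hmem (mem_Nmove_symm_iff.2 h)
    rw [if_neg (fun h => hmem h.1), if_neg (fun h => hmem' h.1)]; ring

end

section
variable {p : ℕ} (pr S : (Fin p → Bool) → ℝ) (w : Move → ℕ → ℝ)

lemma Atrans_nonneg (hpr : ∀ γ, 0 < pr γ) (hS : ∀ γ, 0 < S γ) (hw0 : ∀ m k, 0 ≤ w m k)
    (γ γ' : Fin p → Bool) : 0 ≤ Atrans pr S w γ γ' := by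
  refine Finset.sum_nonneg fun m _ => ?_
  split
  · refine mul_nonneg (mul_nonneg (hw0 _ _) (Tmove_nonneg hS _ _ _)) (le_min zero_le_one ?_)
    exact div_nonneg
      (mul_nonneg (hpr _).le (mul_nonneg (hw0 _ _) (Tmove_nonneg hS _ _ _)))
      (mul_nonneg (hpr _).le (mul_nonneg (hw0 _ _) (Tmove_nonneg hS _ _ _)))
  · exact le_rfl

lemma Atrans_balance (hpr : ∀ γ, 0 < pr γ) (hS : ∀ γ, 0 < S γ) (hw0 : ∀ m k, 0 ≤ w m k)
    (γ γ' : Fin p → Bool) :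
    pr γ * Atrans pr S w γ γ' = pr γ' * Atrans pr S w γ' γ := by
  unfold Atrans
  rw [Finset.mul_sum, Finset.mul_sum]
  rw [← Equiv.sum_comp (Function.Involutive.toPerm Move.pair Move.pair_pair)
    (fun m => pr γ' * (if γ ∈ Nmove m γ' ∧ 0 < w m (gsize γ') then
      w m (gsize γ') * Tmove S m γ' γ *
        min 1 (pr γ * (w m.pair (gsize γ) * Tmove S m.pair γ γ') /
               (pr γ' * (w m (gsize γ') * Tmove S m γ' γ))) else 0))]
  refine Finset.sum_congr rfl fun m _ => ?_
  have := term_balance pr S w hpr hS hw0 m γ γ'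
  simpa [Function.Involutive.toPerm, Move.pair_pair] using this

lemma Atrans_rowsum_le_one (hpr : ∀ γ, 0 < pr γ) (hS : ∀ γ, 0 < S γ)
    (hw0 : ∀ m k, 0 ≤ w m k) (hwsum : ∀ k, w Move.A k + w Move.R k + w Move.S k = 1)
    (γ : Fin p → Bool) : ∑ γ' : Fin p → Bool, Atrans pr S w γ γ' ≤ 1 := by
  unfold Atrans
  rw [Finset.sum_comm]
  have hbound : ∀ m : Move,
      (∑ γ' : Fin p → Bool, if γ' ∈ Nmove m γ ∧ 0 < w m (gsize γ) then
        w m (gsize γ) * Tmove S m γ γ' *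
          min 1 (pr γ' * (w m.pair (gsize γ') * Tmove S m.pair γ' γ) /
                 (pr γ * (w m (gsize γ) * Tmove S m γ γ')))
      else 0) ≤ w m (gsize γ) := by
    intro m
    calc (∑ γ' : Fin p → Bool, if γ' ∈ Nmove m γ ∧ 0 < w m (gsize γ) then
        w m (gsize γ) * Tmove S m γ γ' *
          min 1 (pr γ' * (w m.pair (gsize γ') * Tmove S m.pair γ' γ) /
                 (pr γ * (w m (gsize γ) * Tmove S m γ γ')))
      else 0)
        ≤ ∑ γ' : Fin p → Bool, (if γ' ∈ Nmove m γ then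
            w m (gsize γ) * Tmove S m γ γ' else 0) := by
          refine Finset.sum_le_sum fun γ' _ => ?_
          by_cases h : γ' ∈ Nmove m γ ∧ 0 < w m (gsize γ)
          · rw [if_pos h, if_pos h.1]
            exact mul_le_of_le_one_right
              (mul_nonneg (hw0 _ _) (Tmove_nonneg hS _ _ _)) (min_le_left _ _)
          · rw [if_neg h]
            split
            · exact mul_nonneg (hw0 _ _) (Tmove_nonneg hS _ _ _)
            · exact le_rfl
      _ = ∑ γ' ∈ Nmove m γ, w m (gsize γ) * Tmove S m γ γ' := by
          rw [← Finset.sum_filter]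
          congr 1
          ext γ'
          simp [Finset.mem_filter]
      _ = w m (gsize γ) * ∑ γ' ∈ Nmove m γ, Tmove S m γ γ' := by
          rw [Finset.mul_sum]
      _ ≤ w m (gsize γ) * 1 :=
          mul_le_mul_of_nonneg_left (Tmove_rowsum_le hS m γ) (hw0 _ _)
      _ = w m (gsize γ) := mul_one _
  calc (∑ m : Move, ∑ γ' : Fin p → Bool, _) ≤ ∑ m : Move, w m (gsize γ) :=
        Finset.sum_le_sum fun m _ => hbound m
    _ = 1 := by rw [sum_Move (fun m => w m (gsize γ))]; exact hwsum _

end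

/-- Lemma 1 (invariance): the pRNS transition kernel `K` has nonnegative diagonal,
each row `K(γ, ·)` is a probability mass function, and the target `π` is invariant:
`Σ_γ π(γ) K(γ, γ′) = π(γ′)` for every `γ′`. -/
theorem pRNS_invariance {p : ℕ} (pr S : (Fin p → Bool) → ℝ)
    (hpr : ∀ γ, 0 < pr γ) (hprsum : ∑ γ : Fin p → Bool, pr γ = 1)
    (hS : ∀ γ, 0 < S γ)
    (w : Move → ℕ → ℝ) (hw0 : ∀ m k, 0 ≤ w m k) (hw1 : ∀ m k, w m k ≤ 1)
    (hwsum : ∀ k, w Move.A k + w Move.R k + w Move.S k = 1) :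
    (∀ γ : Fin p → Bool, 0 ≤ Ktrans pr S w γ γ) ∧
    (∀ γ : Fin p → Bool, (∀ γ', 0 ≤ Ktrans pr S w γ γ') ∧
      ∑ γ' : Fin p → Bool, Ktrans pr S w γ γ' = 1) ∧
    (∀ γ' : Fin p → Bool, ∑ γ : Fin p → Bool, pr γ * Ktrans pr S w γ γ' = pr γ') := by
  have hAnn := Atrans_nonneg pr S w hpr hS hw0
  have herase : ∀ γ : Fin p → Bool,
      ∑ x ∈ Finset.univ.erase γ, Atrans pr S w γ x ≤ 1 := by
    intro γ
    calc ∑ x ∈ Finset.univ.erase γ, Atrans pr S w γ x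
        ≤ ∑ x : Fin p → Bool, Atrans pr S w γ x :=
          Finset.sum_le_sum_of_subset_of_nonneg (Finset.erase_subset _ _)
            (fun x _ _ => hAnn γ x)
      _ ≤ 1 := Atrans_rowsum_le_one pr S w hpr hS hw0 hwsum γ
  have hdiag : ∀ γ : Fin p → Bool, 0 ≤ Ktrans pr S w γ γ := by
    intro γ
    rw [Ktrans, if_pos rfl]
    linarith [herase γ]
  refine ⟨hdiag, fun γ => ⟨fun γ' => ?_, ?_⟩, fun γ' => ?_⟩
  · by_cases h : γ' = γ
    · subst h; exact hdiag γ'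
    · rw [Ktrans, if_neg h]; exact hAnn γ γ'
  · rw [← Finset.add_sum_erase _ _ (Finset.mem_univ γ)]
    rw [show Ktrans pr S w γ γ = 1 - ∑ x ∈ Finset.univ.erase γ, Atrans pr S w γ x
      from if_pos rfl]
    rw [Finset.sum_congr rfl (fun x hx =>
      show Ktrans pr S w γ x = Atrans pr S w γ x from
        if_neg (Finset.ne_of_mem_erase hx))]
    ring
  · rw [← Finset.add_sum_erase _ _ (Finset.mem_univ γ')]
    rw [show Ktrans pr S w γ' γ' = 1 - ∑ x ∈ Finset.univ.erase γ', Atrans pr S w γ' x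
      from if_pos rfl]
    rw [Finset.sum_congr rfl (fun γ hγ => show pr γ * Ktrans pr S w γ γ' =
        pr γ' * Atrans pr S w γ' γ from by
      rw [Ktrans, if_neg (Ne.symm (Finset.ne_of_mem_erase hγ))]
      exact Atrans_balance pr S w hpr hS hw0 γ γ')]
    rw [mul_sub, mul_one, ← Finset.mul_sum]
    ring
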